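/- There exist constants c₁, c₂ > 0 such that for all z ∈ ℂ: c₁ · e^{|Im z|} · min(1, dist(z, πℤ)) ≤ |sin z| ≤ c₂ · e^{|Im z|} · min(1, dist(z, πℤ)), where dist(z, πℤ) denotes the distance in ℂ from z to the set {πn : n ∈ ℤ}. -/

import Mathlib

open Real

/-- Square of the modulus of complex sine. -/
lemma aux_abs_sin_sq (z : ℂ) :
    (‖Complex.sin z‖) ^ 2 = Real.sin z.re ^ 2 + Real.sinh z.im ^ 2 := by
  rw [Complex.sq_norm, Complex.sin_eq, ← Complex.ofReal_sin, ← Complex.ofReal_cos,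
    ← Complex.ofReal_sinh, ← Complex.ofReal_cosh, ← Complex.ofReal_mul, ← Complex.ofReal_mul,
    Complex.normSq_add_mul_I]
  nlinarith [Real.sin_sq_add_cos_sq z.re, Real.cosh_sq z.im]

/-- Periodicity (up to sign) of sine, in modulus. -/
lemma aux_abs_sin_sub (z : ℂ) (n : ℤ) :
    ‖Complex.sin (z - (n : ℂ) * (Real.pi : ℂ))‖ = ‖Complex.sin z‖ := by
  have h1 : Complex.sin ((n : ℂ) * (Real.pi : ℂ)) = 0 := Complex.sin_int_mul_pi n
  have h2 : ‖Complex.cos ((n : ℂ) * (Real.pi : ℂ))‖ = 1 := by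
    rw [show ((n : ℂ) * (Real.pi : ℂ)) = (((n : ℝ) * Real.pi : ℝ) : ℂ) by push_cast; ring,
      ← Complex.ofReal_cos, Complex.norm_real, Real.norm_eq_abs]
    exact Real.abs_cos_int_mul_pi n
  rw [Complex.sin_sub, h1, mul_zero, sub_zero, norm_mul, h2, mul_one]

lemma aux_sq_le {a b : ℝ} (ha : 0 ≤ a) (hb : 0 ≤ b) (h : a ^ 2 ≤ b ^ 2) : a ≤ b := by
  nlinarith

/-- sinh t ≤ t * exp t for t ≥ 0 -/
lemma aux_sinh_le (t : ℝ) (ht : 0 ≤ t) : Real.sinh t ≤ t * Real.exp t := by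
  rw [Real.sinh_eq]
  have h := Real.add_one_le_exp (-(2 * t))
  have h2 : Real.exp (-t) = Real.exp t * Real.exp (-(2*t)) := by
    rw [← Real.exp_add]; ring_nf
  nlinarith [Real.exp_pos t, Real.exp_pos (-t), Real.exp_pos (-(2*t)), Real.one_le_exp ht]

/-- |sin z| ≤ exp |Im z| -/
lemma aux_abs_sin_le_exp (z : ℂ) : ‖Complex.sin z‖ ≤ Real.exp |z.im| := by
  apply aux_sq_le (norm_nonneg _) (Real.exp_pos _).le
  rw [aux_abs_sin_sq]
  have h1 : Real.sin z.re ^ 2 ≤ 1 := Real.sin_sq_le_one z.re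
  have h2 : Real.sinh z.im ^ 2 = Real.sinh |z.im| ^ 2 := by
    rw [← Real.abs_sinh]; exact (sq_abs _).symm
  have h3 : Real.sinh |z.im| ^ 2 + 1 = Real.cosh |z.im| ^ 2 := (Real.cosh_sq _).symm
  have h4 : Real.cosh |z.im| ≤ Real.exp |z.im| := by
    rw [Real.cosh_eq]
    nlinarith [Real.exp_pos (-|z.im|), Real.exp_pos |z.im|,
      Real.exp_le_exp.2 (neg_abs_le z.im), Real.exp_le_exp.2 (le_abs_self z.im),
      Real.one_le_exp (abs_nonneg z.im)]
    -- exp(-|y|) ≤ exp(|y|)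
  calc Real.sin z.re ^ 2 + Real.sinh z.im ^ 2 ≤ 1 + Real.sinh |z.im| ^ 2 := by
        rw [h2] at *; linarith
    _ = Real.cosh |z.im| ^ 2 := by linarith
    _ ≤ Real.exp |z.im| ^ 2 := by nlinarith [Real.cosh_pos (x := |z.im|)]

/-- |sin z| ≤ |z| * exp |Im z| -/
lemma aux_abs_sin_le_mul (z : ℂ) :
    ‖Complex.sin z‖ ≤ ‖z‖ * Real.exp |z.im| := by
  apply aux_sq_le (norm_nonneg _)
    (mul_nonneg (norm_nonneg _) (Real.exp_pos _).le)
  rw [aux_abs_sin_sq, mul_pow, Complex.sq_norm, Complex.normSq_apply]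
  have h1 : Real.sin z.re ^ 2 ≤ z.re ^ 2 := by
    rcases eq_or_ne z.re 0 with h | h
    · simp [h]
    · exact (Real.sin_sq_lt_sq h).le
  have h2 : Real.sinh z.im ^ 2 ≤ z.im ^ 2 * Real.exp |z.im| ^ 2 := by
    have := aux_sinh_le |z.im| (abs_nonneg _)
    have h2' : Real.sinh z.im ^ 2 = Real.sinh |z.im| ^ 2 := by
      rw [← Real.abs_sinh]; exact (sq_abs _).symm
    rw [h2']
    have hs : 0 ≤ Real.sinh |z.im| := Real.sinh_nonneg_iff.2 (abs_nonneg _)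
    calc Real.sinh |z.im| ^ 2 ≤ (|z.im| * Real.exp |z.im|) ^ 2 := by nlinarith
      _ = z.im ^ 2 * Real.exp |z.im| ^ 2 := by rw [mul_pow, sq_abs]
  have h3 : (1 : ℝ) ≤ Real.exp |z.im| ^ 2 := by
    nlinarith [Real.one_le_exp (abs_nonneg z.im)]
  calc Real.sin z.re ^ 2 + Real.sinh z.im ^ 2
      ≤ z.re ^ 2 * Real.exp |z.im| ^ 2 + z.im ^ 2 * Real.exp |z.im| ^ 2 := by nlinarith [sq_nonneg z.re]
    _ = (z.re * z.re + z.im * z.im) * Real.exp |z.im| ^ 2 := by ring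

/-- Lower bound when the real part is within π/2 of zero. -/
lemma aux_abs_sin_ge (z : ℂ) (hre : |z.re| ≤ Real.pi / 2) :
    2 / Real.pi * ‖z‖ ≤ ‖Complex.sin z‖ := by
  have hπ := Real.pi_pos
  apply aux_sq_le (mul_nonneg (by positivity) (norm_nonneg _)) (norm_nonneg _)
  rw [aux_abs_sin_sq, mul_pow, Complex.sq_norm, Complex.normSq_apply]
  have h1 : 2 / Real.pi * |z.re| ≤ |Real.sin z.re| := Real.mul_abs_le_abs_sin hre
  have h1' : (2 / Real.pi) ^ 2 * z.re ^ 2 ≤ Real.sin z.re ^ 2 := by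
    have := abs_nonneg z.re
    calc (2 / Real.pi) ^ 2 * z.re ^ 2 = (2 / Real.pi * |z.re|) ^ 2 := by
          rw [mul_pow, sq_abs]
      _ ≤ |Real.sin z.re| ^ 2 := pow_le_pow_left₀ (by positivity) h1 2
      _ = Real.sin z.re ^ 2 := sq_abs _
  have h2 : z.im ^ 2 ≤ Real.sinh z.im ^ 2 := by
    have hs : |z.im| ≤ Real.sinh |z.im| := by
      rcases eq_or_lt_of_le (abs_nonneg z.im) with h | h
      · simp [← h]
      · exact (Real.self_lt_sinh_iff.2 h).le
    calc z.im ^ 2 = |z.im| ^ 2 := (sq_abs _).symm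
      _ ≤ Real.sinh |z.im| ^ 2 := by nlinarith [abs_nonneg z.im]
      _ = Real.sinh z.im ^ 2 := by rw [← Real.abs_sinh, sq_abs]
  have hle : (2 / Real.pi) ^ 2 ≤ 1 := by
    have : 2 ≤ Real.pi := by linarith [Real.pi_gt_three]
    rw [div_pow]
    rw [div_le_one (by positivity)]
    nlinarith
  have h2' : (2 / Real.pi) ^ 2 * z.im ^ 2 ≤ Real.sinh z.im ^ 2 := by
    nlinarith [sq_nonneg z.im]
  calc (2 / Real.pi) ^ 2 * (z.re * z.re + z.im * z.im)
      = (2 / Real.pi) ^ 2 * z.re ^ 2 + (2 / Real.pi) ^ 2 * z.im ^ 2 := by ring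
    _ ≤ Real.sin z.re ^ 2 + Real.sinh z.im ^ 2 := by linarith

/-- There are constants `c₁, c₂ > 0` with
`c₁ e^{|Im z|} min(1, dist(z, πℤ)) ≤ |sin z| ≤ c₂ e^{|Im z|} min(1, dist(z, πℤ))`
for all `z ∈ ℂ`. -/
theorem sin_two_sided_estimate :
    ∃ c₁ c₂ : ℝ, 0 < c₁ ∧ 0 < c₂ ∧ ∀ z : ℂ,
      c₁ * Real.exp |z.im| *
          min 1 (Metric.infDist z (Set.range fun n : ℤ => ((n : ℂ) * Real.pi))) ≤
        ‖Complex.sin z‖ ∧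
      ‖Complex.sin z‖ ≤
        c₂ * Real.exp |z.im| *
          min 1 (Metric.infDist z (Set.range fun n : ℤ => ((n : ℂ) * Real.pi))) := by
  have hπ := Real.pi_pos
  set S : Set ℂ := Set.range fun n : ℤ => ((n : ℂ) * Real.pi) with hS
  have hSne : S.Nonempty := ⟨0, ⟨0, by simp⟩⟩
  have hexp2 : Real.exp (-2) < 1 := by
    rw [Real.exp_lt_one_iff]; norm_num
  refine ⟨min ((1 - Real.exp (-2)) / 2) (2 / (Real.pi * Real.exp 1)), 1,
    lt_min (by linarith) (by positivity), one_pos, fun z => ?_⟩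
  set d := Metric.infDist z S with hd
  have hd0 : 0 ≤ d := Metric.infDist_nonneg
  have hm0 : 0 ≤ min 1 d := le_min zero_le_one hd0
  have hm1 : min 1 d ≤ 1 := min_le_left _ _
  have hmd : min 1 d ≤ d := min_le_right _ _
  constructor
  · -- lower bound
    set c₁ := min ((1 - Real.exp (-2)) / 2) (2 / (Real.pi * Real.exp 1)) with hc₁
    rcases le_or_gt 1 |z.im| with hy | hy
    · -- |Im z| ≥ 1 : use sinh
      have key : (1 - Real.exp (-2)) / 2 * Real.exp |z.im| ≤ ‖Complex.sin z‖ := by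
        apply aux_sq_le (mul_nonneg (by linarith) (Real.exp_pos _).le) (norm_nonneg _)
        rw [aux_abs_sin_sq]
        have hsinh : (1 - Real.exp (-2)) / 2 * Real.exp |z.im| ≤ Real.sinh |z.im| := by
          rw [Real.sinh_eq]
          have h1 : Real.exp (-|z.im|) = Real.exp |z.im| * Real.exp (-(2 * |z.im|)) := by
            rw [← Real.exp_add]; ring_nf
          have h2 : Real.exp (-(2 * |z.im|)) ≤ Real.exp (-2) :=
            Real.exp_le_exp.2 (by linarith)
          nlinarith [Real.exp_pos |z.im|]
        have hsq : Real.sinh |z.im| ^ 2 = Real.sinh z.im ^ 2 := by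
          rw [← Real.abs_sinh, sq_abs]
        have hsq2 : ((1 - Real.exp (-2)) / 2 * Real.exp |z.im|) ^ 2 ≤ Real.sinh |z.im| ^ 2 :=
          pow_le_pow_left₀ (mul_nonneg (by linarith) (Real.exp_pos _).le) hsinh 2
        nlinarith [sq_nonneg (Real.sin z.re)]
      have hc : c₁ ≤ (1 - Real.exp (-2)) / 2 := min_le_left _ _
      have : c₁ * Real.exp |z.im| * min 1 d ≤ (1 - Real.exp (-2)) / 2 * Real.exp |z.im| := by
        have h0 : 0 < c₁ := lt_min (by linarith) (by positivity)
        calc c₁ * Real.exp |z.im| * min 1 d ≤ c₁ * Real.exp |z.im| * 1 := by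
              apply mul_le_mul_of_nonneg_left hm1 (mul_nonneg h0.le (Real.exp_pos _).le)
          _ = c₁ * Real.exp |z.im| := mul_one _
          _ ≤ (1 - Real.exp (-2)) / 2 * Real.exp |z.im| := by
              apply mul_le_mul_of_nonneg_right hc (Real.exp_pos _).le
      linarith
    · -- |Im z| < 1 : reduce modulo π
      set n : ℤ := round (z.re / Real.pi) with hn
      set w : ℂ := z - (n : ℂ) * (Real.pi : ℂ) with hw
      have hwim : w.im = z.im := by simp [hw]
      have hwre : w.re = z.re - n * Real.pi := by simp [hw]
      have hwre_le : |w.re| ≤ Real.pi / 2 := by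
        rw [hwre]
        have h := abs_sub_round (z.re / Real.pi)
        have : z.re - n * Real.pi = (z.re / Real.pi - n) * Real.pi := by
          field_simp
        rw [this, abs_mul, abs_of_pos hπ]
        calc |z.re / Real.pi - (n : ℝ)| * Real.pi ≤ (1 / 2) * Real.pi := by
              apply mul_le_mul_of_nonneg_right h hπ.le
          _ = Real.pi / 2 := by ring
      have habs : ‖Complex.sin w‖ = ‖Complex.sin z‖ :=
        aux_abs_sin_sub z n
      have hlow : 2 / Real.pi * ‖w‖ ≤ ‖Complex.sin z‖ := by
        rw [← habs]; exact aux_abs_sin_ge w hwre_le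
      have hdw : d ≤ ‖w‖ := by
        have hmem : (n : ℂ) * (Real.pi : ℂ) ∈ S := ⟨n, rfl⟩
        calc d ≤ dist z ((n : ℂ) * (Real.pi : ℂ)) := Metric.infDist_le_dist_of_mem hmem
          _ = ‖w‖ := by rw [Complex.dist_eq, hw]
      have hc : c₁ ≤ 2 / (Real.pi * Real.exp 1) := min_le_right _ _
      have hexp : Real.exp |z.im| ≤ Real.exp 1 := Real.exp_le_exp.2 hy.le
      have h0 : 0 < c₁ := lt_min (by linarith) (by positivity)
      calc c₁ * Real.exp |z.im| * min 1 d
          ≤ (2 / (Real.pi * Real.exp 1)) * Real.exp 1 * min 1 d := by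
            apply mul_le_mul_of_nonneg_right _ hm0
            calc c₁ * Real.exp |z.im| ≤ (2 / (Real.pi * Real.exp 1)) * Real.exp |z.im| :=
                  mul_le_mul_of_nonneg_right hc (Real.exp_pos _).le
              _ ≤ (2 / (Real.pi * Real.exp 1)) * Real.exp 1 :=
                  mul_le_mul_of_nonneg_left hexp (by positivity)
        _ = 2 / Real.pi * min 1 d := by
            have he : (2 / (Real.pi * Real.exp 1)) * Real.exp 1 = 2 / Real.pi := by
              field_simp
            rw [he]
        _ ≤ 2 / Real.pi * d := mul_le_mul_of_nonneg_left hmd (by positivity)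
        _ ≤ 2 / Real.pi * ‖w‖ := mul_le_mul_of_nonneg_left hdw (by positivity)
        _ ≤ ‖Complex.sin z‖ := hlow
  · -- upper bound
    rw [one_mul]
    have key : Real.exp |z.im| * min 1 d = min (Real.exp |z.im| * 1) (Real.exp |z.im| * d) :=
      (mul_min_of_nonneg _ _ (Real.exp_pos _).le)
    rw [key]
    refine le_min ?_ ?_
    · rw [mul_one]; exact aux_abs_sin_le_exp z
    · -- |sin z| ≤ exp|y| * infDist
      rw [mul_comm]
      rw [← div_le_iff₀ (Real.exp_pos _)]
      by_contra hcon
      push_neg at hcon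
      rw [hd] at hcon
      obtain ⟨y, hyS, hylt⟩ := (Metric.infDist_lt_iff hSne).1 hcon
      obtain ⟨k, hk⟩ := hyS
      have hb : ‖Complex.sin z‖ ≤ dist z y * Real.exp |z.im| := by
        have h1 : ‖Complex.sin (z - y)‖ = ‖Complex.sin z‖ := by
          rw [← hk]; exact aux_abs_sin_sub z k
        have h2 : (z - y).im = z.im := by
          rw [← hk]; simp
        calc ‖Complex.sin z‖ = ‖Complex.sin (z - y)‖ := h1.symm
          _ ≤ ‖z - y‖ * Real.exp |(z - y).im| := aux_abs_sin_le_mul (z - y)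
          _ = dist z y * Real.exp |z.im| := by rw [Complex.dist_eq, h2]
      rw [lt_div_iff₀ (Real.exp_pos _)] at hylt
      linarith
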